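/- Convergence of the inexact Uzawa method (Theorem 3.2). Assume the problem is consistent: ℓ(v) = b(u*, v) for all v ∈ V, so that (0, u*) is the saddle point (r* = 0). Fix δ > 0, ε > 0, τ > 0, set γ := ‖I − τ R_U⁻¹B†R_V⁻¹B‖ (operator norm on U), and assume γ < 1 and δ + ε(1 + δ) < (1 − γ)/(τM²). Given u⁰_{δ,ε} ∈ U, suppose for each k ≥ 0: rᵏ := R_V⁻¹(ℓ − B uᵏ_{δ,ε}); rᵏ_δ ∈ V satisfies ‖rᵏ_δ − rᵏ‖_V ≤ δ‖rᵏ‖_V; uᵏ⁺¹_δ := uᵏ_{δ,ε} + τ R_U⁻¹B†rᵏ_δ; and uᵏ⁺¹_{δ,ε} ∈ U satisfies ‖uᵏ⁺¹_{δ,ε} − uᵏ⁺¹_δ‖_U ≤ ε‖uᵏ_{δ,ε} − uᵏ⁺¹_δ‖_U. Then uᵏ_{δ,ε} → u* in U and rᵏ_δ → r* = 0 in V as k → ∞. -/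

import Mathlib

set_option maxHeartbeats 1600000


open scoped RealInnerProductSpace
open Filter

/-- Convergence of the inexact Uzawa method (Theorem 3.2). -/
theorem inexact_uzawa_convergence
    {U V : Type*}
    [NormedAddCommGroup U] [InnerProductSpace ℝ U] [CompleteSpace U]
    [NormedAddCommGroup V] [InnerProductSpace ℝ V] [CompleteSpace V]
    (B : U →L[ℝ] V →L[ℝ] ℝ) (ℓ : V →L[ℝ] ℝ) (m M : ℝ)
    (hm : 0 < m) (hmM : m ≤ M)
    (hBlow : ∀ x : U, m * ‖x‖ ≤ ‖B x‖) (hBup : ∀ x : U, ‖B x‖ ≤ M * ‖x‖)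
    (ustar : U) (hcons : ∀ v : V, ℓ v = B ustar v)
    (δ ε τ : ℝ) (hδ : 0 < δ) (hε : 0 < ε) (hτ : 0 < τ)
    (G : U →L[ℝ] U)
    (hG : ∀ x : U, G x = (InnerProductSpace.toDual ℝ U).symm
      (B.flip ((InnerProductSpace.toDual ℝ V).symm (B x))))
    (γ : ℝ) (hγdef : γ = ‖ContinuousLinearMap.id ℝ U - τ • G‖)
    (hγ : γ < 1) (hsmall : δ + ε * (1 + δ) < (1 - γ) / (τ * M ^ 2))
    (uδε : ℕ → U) (rδ : ℕ → V) (uδ : ℕ → U)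
    (hrδ : ∀ k, ‖rδ k - (InnerProductSpace.toDual ℝ V).symm (ℓ - B (uδε k))‖ ≤
      δ * ‖(InnerProductSpace.toDual ℝ V).symm (ℓ - B (uδε k))‖)
    (huδ : ∀ k, uδ (k + 1) =
      uδε k + τ • (InnerProductSpace.toDual ℝ U).symm (B.flip (rδ k)))
    (huδε : ∀ k, ‖uδε (k + 1) - uδ (k + 1)‖ ≤ ε * ‖uδε k - uδ (k + 1)‖) :
    Tendsto uδε atTop (nhds ustar) ∧ Tendsto rδ atTop (nhds 0) := by
  set tdU := (InnerProductSpace.toDual ℝ U).symm with htdU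
  set tdV := (InnerProductSpace.toDual ℝ V).symm with htdV
  set e : ℕ → U := fun k => uδε k - ustar with he
  have hM : 0 < M := lt_of_lt_of_le hm hmM
  have hℓ : ℓ = B ustar := ContinuousLinearMap.ext hcons
  -- the exact residual
  set r : ℕ → V := fun k => tdV (ℓ - B (uδε k)) with hr
  have hr_eq : ∀ k, r k = -tdV (B (e k)) := by
    intro k
    rw [hr, ← map_neg]
    congr 1
    rw [hℓ, he]
    simp [map_sub]
  have hrnorm : ∀ k, ‖r k‖ = ‖B (e k)‖ := by
    intro k
    rw [hr_eq k, norm_neg, htdV, (InnerProductSpace.toDual ℝ V).symm.norm_map]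
  have hr_le : ∀ k, ‖r k‖ ≤ M * ‖e k‖ := fun k => (hrnorm k) ▸ hBup (e k)
  -- operator norm bound for B.flip
  have hflip : ∀ v : V, ‖B.flip v‖ ≤ M * ‖v‖ := by
    intro v
    refine ContinuousLinearMap.opNorm_le_bound _ (mul_nonneg hM.le (norm_nonneg v)) fun w => ?_
    have h1 : ‖B.flip v w‖ ≤ ‖B w‖ * ‖v‖ := (B w).le_opNorm v
    calc ‖B.flip v w‖ ≤ ‖B w‖ * ‖v‖ := h1
      _ ≤ (M * ‖w‖) * ‖v‖ := mul_le_mul_of_nonneg_right (hBup w) (norm_nonneg v)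
      _ = M * ‖v‖ * ‖w‖ := by ring
  have hrδ_le : ∀ k, ‖rδ k‖ ≤ (1 + δ) * M * ‖e k‖ := by
    intro k
    have h1 : ‖rδ k‖ ≤ ‖rδ k - r k‖ + ‖r k‖ := by
      simpa using norm_add_le (rδ k - r k) (r k)
    have h2 : ‖rδ k - r k‖ ≤ δ * ‖r k‖ := hrδ k
    have h3 := hr_le k
    nlinarith [norm_nonneg (e k), hr_le k, hδ.le]
  set ρ : ℝ := γ + τ * M ^ 2 * (δ + ε * (1 + δ)) with hρ
  have hγ0 : 0 ≤ γ := hγdef ▸ norm_nonneg _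
  have hτM2 : 0 < τ * M ^ 2 := by positivity
  have hρ0 : 0 ≤ ρ := by
    have : 0 ≤ δ + ε * (1 + δ) := by positivity
    positivity
  have hρ1 : ρ < 1 := by
    have := (lt_div_iff₀ hτM2).mp hsmall
    linarith
  -- main recursion
  have hkey : ∀ k, ‖e (k + 1)‖ ≤ ρ * ‖e k‖ := by
    intro k
    have hrkeq : tdV (B (e k)) = -(r k) := by rw [hr_eq k]; simp
    have hdec : uδ (k + 1) - ustar =
        (ContinuousLinearMap.id ℝ U - τ • G) (e k) + τ • tdU (B.flip (rδ k - r k)) := by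
      have hGe : G (e k) = -(tdU (B.flip (r k))) := by
        rw [hG (e k), hrkeq, map_neg, map_neg]
      have hek : e k = uδε k - ustar := rfl
      rw [huδ k, ContinuousLinearMap.sub_apply, ContinuousLinearMap.smul_apply,
        ContinuousLinearMap.id_apply, hGe, map_sub, map_sub, hek, smul_neg, smul_sub]
      abel
    have hb1 : ‖(ContinuousLinearMap.id ℝ U - τ • G) (e k)‖ ≤ γ * ‖e k‖ := by
      rw [hγdef]; exact ContinuousLinearMap.le_opNorm _ _
    have hb2 : ‖τ • tdU (B.flip (rδ k - r k))‖ ≤ τ * M ^ 2 * δ * ‖e k‖ := by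
      rw [norm_smul, Real.norm_of_nonneg hτ.le, htdU,
        (InnerProductSpace.toDual ℝ U).symm.norm_map]
      have h1 : ‖B.flip (rδ k - r k)‖ ≤ M * ‖rδ k - r k‖ := hflip _
      have h2 : ‖rδ k - r k‖ ≤ δ * ‖r k‖ := hrδ k
      have h3 := hr_le k
      calc τ * ‖B.flip (rδ k - r k)‖
          ≤ τ * (M * ‖rδ k - r k‖) := by gcongr
        _ ≤ τ * (M * (δ * ‖r k‖)) := by gcongr
        _ ≤ τ * (M * (δ * (M * ‖e k‖))) := by gcongr
        _ = τ * M ^ 2 * δ * ‖e k‖ := by ring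
    have hb3 : ‖uδ (k + 1) - ustar‖ ≤ (γ + τ * M ^ 2 * δ) * ‖e k‖ := by
      calc ‖uδ (k + 1) - ustar‖ ≤ ‖(ContinuousLinearMap.id ℝ U - τ • G) (e k)‖
            + ‖τ • tdU (B.flip (rδ k - r k))‖ := by rw [hdec]; exact norm_add_le _ _
        _ ≤ γ * ‖e k‖ + τ * M ^ 2 * δ * ‖e k‖ := add_le_add hb1 hb2
        _ = (γ + τ * M ^ 2 * δ) * ‖e k‖ := by ring
    have hb4 : ‖uδε k - uδ (k + 1)‖ ≤ τ * M ^ 2 * (1 + δ) * ‖e k‖ := by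
      rw [huδ k]
      have : uδε k - (uδε k + τ • tdU (B.flip (rδ k))) = -(τ • tdU (B.flip (rδ k))) := by abel
      rw [this, norm_neg, norm_smul, Real.norm_of_nonneg hτ.le, htdU,
        (InnerProductSpace.toDual ℝ U).symm.norm_map]
      have h1 : ‖B.flip (rδ k)‖ ≤ M * ‖rδ k‖ := hflip _
      have h2 := hrδ_le k
      calc τ * ‖B.flip (rδ k)‖
          ≤ τ * (M * ‖rδ k‖) := by gcongr
        _ ≤ τ * (M * ((1 + δ) * M * ‖e k‖)) := by gcongr
        _ = τ * M ^ 2 * (1 + δ) * ‖e k‖ := by ring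
    have hsplit : e (k + 1) = (uδε (k + 1) - uδ (k + 1)) + (uδ (k + 1) - ustar) := by
      rw [he]; abel
    calc ‖e (k + 1)‖ ≤ ‖uδε (k + 1) - uδ (k + 1)‖ + ‖uδ (k + 1) - ustar‖ := by
          rw [hsplit]; exact norm_add_le _ _
      _ ≤ ε * ‖uδε k - uδ (k + 1)‖ + (γ + τ * M ^ 2 * δ) * ‖e k‖ := add_le_add (huδε k) hb3
      _ ≤ ε * (τ * M ^ 2 * (1 + δ) * ‖e k‖) + (γ + τ * M ^ 2 * δ) * ‖e k‖ :=
          add_le_add_left (mul_le_mul_of_nonneg_left hb4 hε.le) _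
      _ = ρ * ‖e k‖ := by rw [hρ]; ring
  -- geometric decay
  have hgeo : ∀ k, ‖e k‖ ≤ ρ ^ k * ‖e 0‖ := by
    intro k
    induction k with
    | zero => simp
    | succ n ih =>
      calc ‖e (n + 1)‖ ≤ ρ * ‖e n‖ := hkey n
        _ ≤ ρ * (ρ ^ n * ‖e 0‖) := mul_le_mul_of_nonneg_left ih hρ0
        _ = ρ ^ (n + 1) * ‖e 0‖ := by ring
  have hgeot : Tendsto (fun k => ρ ^ k * ‖e 0‖) atTop (nhds 0) := by
    simpa using (tendsto_pow_atTop_nhds_zero_of_lt_one hρ0 hρ1).mul_const ‖e 0‖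
  have hetend : Tendsto (fun k => ‖e k‖) atTop (nhds 0) :=
    squeeze_zero (fun k => norm_nonneg _) hgeo hgeot
  constructor
  · exact tendsto_iff_norm_sub_tendsto_zero.mpr hetend
  · refine tendsto_zero_iff_norm_tendsto_zero.mpr ?_
    refine squeeze_zero (fun k => norm_nonneg _) hrδ_le ?_
    simpa using hetend.const_mul ((1 + δ) * M)
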